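/- Let n ≥ 1. For all binary strings J, K ∈ {0,1}ⁿ, the matrix A_{JK} equals the rank-one matrix unit |j₁…jₙ⟩⟨k₁…kₙ| (the matrix whose only nonzero entry is a 1 in row J, column K). -/

import Mathlib

open Matrix Polynomial

/-- Binary strings of length `n`, indexing the `2^n`-dimensional Fock space. -/
abbrev Idx (n : ℕ) := Fin n → Fin 2

/-- Jordan–Wigner creation matrix `aₜ†` for mode `t`:
`aₜ†|j₁…jₙ⟩ = (−1)^{j₁+⋯+j_{t−1}} |j₁…j_{t−1} 1 j_{t+1}…jₙ⟩` if `jₜ = 0`, and `0` if `jₜ = 1`. -/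
noncomputable def adag (n : ℕ) (t : Fin n) : Matrix (Idx n) (Idx n) ℂ :=
  Matrix.of fun J K =>
    if K t = 0 ∧ J = Function.update K t 1
    then (-1 : ℂ) ^ (∑ s ∈ Finset.univ.filter (fun s => s < t), (K s : ℕ))
    else 0

/-- Jordan–Wigner annihilation matrix `aₜ`, the conjugate transpose of `aₜ†`. -/
noncomputable def ann (n : ℕ) (t : Fin n) : Matrix (Idx n) (Idx n) ℂ := (adag n t)ᴴ

/-- `c_{jₛ}† = aₛaₛ†` if `jₛ = 0` and `aₛ†` if `jₛ = 1`. -/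
noncomputable def cdag (n : ℕ) (s : Fin n) (j : Fin 2) : Matrix (Idx n) (Idx n) ℂ :=
  if j = 0 then ann n s * adag n s else adag n s

/-- `c_{kₛ} = aₛaₛ†` if `kₛ = 0` and `aₛ` if `kₛ = 1`. -/
noncomputable def cann (n : ℕ) (s : Fin n) (k : Fin 2) : Matrix (Idx n) (Idx n) ℂ :=
  if k = 0 then ann n s * adag n s else ann n s

/-- `A_{JK} = c_{j₁}† c_{j₂}† ⋯ c_{jₙ}† c_{kₙ} ⋯ c_{k₂} c_{k₁}`. -/
noncomputable def AJK (n : ℕ) (J K : Idx n) : Matrix (Idx n) (Idx n) ℂ :=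
  (((List.finRange n).map fun s => cdag n s (J s)).prod) *
  ((((List.finRange n).reverse).map fun s => cann n s (K s)).prod)

section Aux
variable {n : ℕ}

lemma adag_apply (t : Fin n) (L L' : Idx n) :
    adag n t L L' = if L' t = 0 ∧ L = Function.update L' t 1
      then (-1 : ℂ) ^ (∑ s ∈ Finset.univ.filter (fun s => s < t), (L' s : ℕ)) else 0 := rfl

lemma ann_apply (t : Fin n) (L L' : Idx n) :
    ann n t L L' = if L t = 0 ∧ L' = Function.update L t 1
      then (-1 : ℂ) ^ (∑ s ∈ Finset.univ.filter (fun s => s < t), (L s : ℕ)) else 0 := by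
  simp only [ann, Matrix.conjTranspose_apply, adag_apply]
  split_ifs <;> simp [star_pow, star_neg, star_one]

lemma update_one_inj {t : Fin n} {L L' : Idx n} (h0 : L t = 0) (h1 : L' t = 0)
    (h : Function.update L t 1 = Function.update L' t 1) : L = L' := by
  funext s
  by_cases hs : s = t
  · subst hs; rw [h0, h1]
  · have := congrFun h s
    simpa [Function.update_of_ne hs] using this

lemma proj_apply (t : Fin n) (L L' : Idx n) :
    (ann n t * adag n t) L L' = if L = L' ∧ L t = 0 then 1 else 0 := by
  rw [Matrix.mul_apply]
  by_cases h0 : L t = 0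
  · by_cases hLL : L = L'
    · subst hLL
      rw [if_pos ⟨rfl, h0⟩]
      rw [Finset.sum_eq_single (Function.update L t 1)]
      · rw [ann_apply, adag_apply, if_pos ⟨h0, rfl⟩, ← pow_add]
        exact Even.neg_one_pow ⟨_, rfl⟩
      · intro b _ hb
        rw [ann_apply, if_neg (fun hc => hb hc.2), zero_mul]
      · intro h; exact absurd (Finset.mem_univ _) h
    · rw [if_neg (fun hc => hLL hc.1)]
      apply Finset.sum_eq_zero
      intro M _
      rw [ann_apply, adag_apply]
      split_ifs with ha hb h3
      · exact absurd (update_one_inj h0 hb.1 (ha.2.symm.trans hb.2)) hLL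
      · ring
      · ring
      · ring
  · rw [if_neg (fun hc => h0 hc.2)]
    apply Finset.sum_eq_zero
    intro M _
    rw [ann_apply, if_neg (fun hc => h0 hc.1), zero_mul]

/-- result of zeroing out all bits below `m`. -/
def lowz (n m : ℕ) (L : Idx n) : Idx n := fun s => if s.val < m then 0 else L s

lemma lo_prod (K : Idx n) : ∀ m, m ≤ n →
    ((((List.finRange n).take m).reverse).map fun s => cann n s (K s)).prod
      = Matrix.of (fun L L' => if L = lowz n m L' ∧ (∀ s : Fin n, s.val < m → L' s = K s)
          then (1:ℂ) else 0) := by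
  intro m
  induction m with
  | zero =>
    intro _
    ext L L'
    have h1 : lowz n 0 L' = L' := funext fun s => if_neg (by omega)
    simp [Matrix.one_apply, h1]
  | succ m ih =>
    intro hm
    have hmn : m < n := hm
    set t : Fin n := ⟨m, hmn⟩ with ht
    have htv : (t : ℕ) = m := rfl
    have hlist : ((List.finRange n).take (m+1)).reverse
        = t :: ((List.finRange n).take m).reverse := by
      rw [List.take_succ]
      have hg : (List.finRange n)[m]? = some t := by
        rw [List.getElem?_eq_getElem (by simpa using hmn)]
        simp [ht]
      rw [hg]
      simp
    rw [hlist, List.map_cons, List.prod_cons, ih (le_of_lt hmn)]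
    ext L L''
    rw [Matrix.mul_apply]
    simp only [Matrix.of_apply]
    by_cases hP : ∀ s : Fin n, s.val < m → L'' s = K s
    · simp only [eq_true hP, and_true, mul_ite, mul_one, mul_zero]
      rw [Finset.sum_ite_eq' Finset.univ (lowz n m L''), if_pos (Finset.mem_univ _)]
      have hlowt : lowz n m L'' t = L'' t := if_neg (by omega)
      have hlowlt : ∀ s : Fin n, s.val < m → lowz n m L'' s = 0 := fun s hs => if_pos hs
      by_cases hK : K t = 0
      · rw [cann, if_pos hK, proj_apply]
        have hiff : (L = lowz n m L'' ∧ L t = 0)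
            ↔ (L = lowz n (m+1) L'' ∧ ∀ s : Fin n, s.val < m+1 → L'' s = K s) := by
          constructor
          · rintro ⟨hL, h0⟩
            have hbit : L'' t = 0 := by
              rw [← hlowt, ← congrFun hL t, h0]
            constructor
            · funext s
              rw [congrFun hL s]
              show lowz n m L'' s = lowz n (m+1) L'' s
              simp only [lowz]
              by_cases hsm : s.val < m
              · have h2 : s.val < m + 1 := by omega
                simp [hsm, h2]
              · by_cases hsm' : s.val = m
                · have hst : s = t := Fin.ext hsm'
                  have h2 : s.val < m + 1 := by omega
                  simp only [if_neg hsm, if_pos h2]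
                  rw [hst, hbit]
                · have h2 : ¬ s.val < m + 1 := by omega
                  simp [hsm, h2]
            · intro s hs
              by_cases hsm : s.val < m
              · exact hP s hsm
              · have hst : s = t := Fin.ext (by omega)
                rw [hst, hbit, hK]
          · rintro ⟨hL, hQ⟩
            have hbit : L'' t = 0 := by rw [hQ t (by omega), hK]
            constructor
            · funext s
              rw [congrFun hL s]
              show lowz n (m+1) L'' s = lowz n m L'' s
              simp only [lowz]
              by_cases hsm : s.val < m
              · have h2 : s.val < m + 1 := by omega
                simp [hsm, h2]
              · by_cases hsm' : s.val = m
                · have hst : s = t := Fin.ext hsm'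
                  have h2 : s.val < m + 1 := by omega
                  simp only [if_pos h2, if_neg hsm]
                  rw [hst, hbit]
                · have h2 : ¬ s.val < m + 1 := by omega
                  simp [hsm, h2]
            · rw [congrFun hL t]
              show lowz n (m+1) L'' t = 0
              exact if_pos (by omega)
        rw [if_congr hiff rfl rfl]
      · -- K t = 1 : annihilation
        rw [cann, if_neg hK, ann_apply]
        have hK1 : K t = 1 := by omega
        by_cases hc : L t = 0 ∧ lowz n m L'' = Function.update L t 1
        · have hzero : ∀ s : Fin n, s.val < m → L s = 0 := by
            intro s hs
            have hne : s ≠ t := by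
              intro h; rw [h, htv] at hs; omega
            have h := congrFun hc.2 s
            rw [Function.update_of_ne hne] at h
            rw [← h]
            exact hlowlt s hs
          have hexp : (∑ s ∈ Finset.univ.filter (fun s => s < t), ((L s : ℕ))) = 0 := by
            apply Finset.sum_eq_zero
            intro s hs
            have hst : s < t := (Finset.mem_filter.mp hs).2
            rw [hzero s (by rw [Fin.lt_def, htv] at hst; exact hst)]
            rfl
          rw [if_pos hc, hexp, pow_zero]
          have hbit : L'' t = 1 := by
            have h := congrFun hc.2 t
            rw [Function.update_self] at h
            rw [← hlowt, h]
          have hcond : L = lowz n (m+1) L'' ∧ ∀ s : Fin n, s.val < m+1 → L'' s = K s := by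
            constructor
            · funext s
              show L s = lowz n (m+1) L'' s
              simp only [lowz]
              by_cases hsm : s.val < m
              · have h2 : s.val < m + 1 := by omega
                rw [if_pos h2]
                exact hzero s hsm
              · by_cases hsm' : s.val = m
                · have hst : s = t := Fin.ext hsm'
                  have h2 : s.val < m + 1 := by omega
                  rw [if_pos h2, hst]
                  exact hc.1
                · have hne : s ≠ t := fun h => hsm' (by rw [h, htv])
                  have h2 : ¬ s.val < m + 1 := by omega
                  rw [if_neg h2]
                  have h := congrFun hc.2 s
                  rw [Function.update_of_ne hne] at h
                  rw [← h]
                  show lowz n m L'' s = L'' s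
                  exact if_neg hsm
            · intro s hs
              by_cases hsm : s.val < m
              · exact hP s hsm
              · have hst : s = t := Fin.ext (by omega)
                rw [hst, hbit, hK1]
          rw [if_pos hcond]
        · rw [if_neg hc]
          symm
          rw [if_neg]
          rintro ⟨hL, hQ⟩
          apply hc
          have hbit : L'' t = 1 := by rw [hQ t (by omega), hK1]
          have h0 : L t = 0 := by
            rw [congrFun hL t]
            exact if_pos (by omega)
          refine ⟨h0, ?_⟩
          funext s
          by_cases hst : s = t
          · rw [hst, Function.update_self, hlowt, hbit]
          · rw [Function.update_of_ne hst, congrFun hL s]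
            show lowz n m L'' s = lowz n (m+1) L'' s
            simp only [lowz]
            by_cases hsm : s.val < m
            · have h2 : s.val < m + 1 := by omega
              simp [hsm, h2]
            · have hsm' : s.val ≠ m := fun h => hst (Fin.ext h)
              have h2 : ¬ s.val < m + 1 := by omega
              simp [hsm, h2]
    · rw [if_neg (fun hc => hP (fun s hs => hc.2 s (by omega)))]
      apply Finset.sum_eq_zero
      intro L' _
      rw [if_neg (fun hc => hP hc.2), mul_zero]

/-- keep bits of `J` at positions `≥ m`, zero below. -/
def hiJ (n m : ℕ) (J : Idx n) : Idx n := fun s => if m ≤ s.val then J s else 0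

lemma hi_prod (J K : Idx n) : ∀ k m, m + k = n →
    (((List.finRange n).drop m).map fun s => cdag n s (J s)).prod *
      Matrix.of (fun L L' : Idx n => if L = hiJ n n J ∧ L' = K then (1:ℂ) else 0)
    = Matrix.of (fun L L' : Idx n => if L = hiJ n m J ∧ L' = K then (1:ℂ) else 0) := by
  intro k
  induction k with
  | zero =>
    intro m hm
    obtain rfl : m = n := by omega
    have hnil : (List.finRange m).drop m = [] := List.drop_eq_nil_of_le (by simp)
    rw [hnil, List.map_nil, List.prod_nil, one_mul]
  | succ k ih =>
    intro m hm
    have hmn : m < n := by omega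
    set t : Fin n := ⟨m, hmn⟩ with ht
    have htv : (t : ℕ) = m := rfl
    have hdrop : (List.finRange n).drop m = t :: (List.finRange n).drop (m+1) := by
      rw [List.drop_eq_getElem_cons (by simpa using hmn)]
      congr 1
      simp [ht]
    rw [hdrop, List.map_cons, List.prod_cons, mul_assoc, ih (m+1) (by omega)]
    ext L L''
    rw [Matrix.mul_apply]
    simp only [Matrix.of_apply]
    by_cases hKK : L'' = K
    · subst hKK
      simp only [eq_self_iff_true, and_true, mul_ite, mul_one, mul_zero]
      rw [Finset.sum_ite_eq' Finset.univ (hiJ n (m+1) J), if_pos (Finset.mem_univ _)]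
      have hhit : hiJ n (m+1) J t = 0 := if_neg (by omega)
      have hhilt : ∀ s : Fin n, s.val < m + 1 → hiJ n (m+1) J s = 0 :=
        fun s hs => if_neg (by omega)
      by_cases hJ : J t = 0
      · rw [cdag, if_pos hJ, proj_apply]
        have heq : hiJ n (m+1) J = hiJ n m J := by
          funext s
          show (if m+1 ≤ s.val then J s else 0) = if m ≤ s.val then J s else 0
          by_cases h1 : m + 1 ≤ s.val
          · rw [if_pos h1, if_pos (by omega)]
          · by_cases h2 : s.val = m
            · have hst : s = t := Fin.ext h2
              rw [if_neg h1, if_pos (by omega), hst, hJ]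
            · rw [if_neg h1, if_neg (by omega)]
        have hXt : hiJ n m J t = 0 := by rw [← heq]; exact hhit
        have hiff : (L = hiJ n (m+1) J ∧ L t = 0) ↔ (L = hiJ n m J) := by
          constructor
          · rintro ⟨hL, _⟩
            rw [hL, heq]
          · intro hL
            exact ⟨by rw [hL, heq], by rw [hL, hXt]⟩
        rw [if_congr hiff rfl rfl]
      · have hJ1 : J t = 1 := by omega
        rw [cdag, if_neg hJ, adag_apply]
        have hupd : Function.update (hiJ n (m+1) J) t 1 = hiJ n m J := by
          funext s
          by_cases hst : s = t
          · rw [hst, Function.update_self]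
            show (1 : Fin 2) = if m ≤ (t:ℕ) then J t else 0
            rw [if_pos (by omega), hJ1]
          · rw [Function.update_of_ne hst]
            show (if m+1 ≤ s.val then J s else 0) = if m ≤ s.val then J s else 0
            have hsm' : s.val ≠ m := fun h => hst (Fin.ext h)
            by_cases h1 : m + 1 ≤ s.val
            · rw [if_pos h1, if_pos (by omega)]
            · rw [if_neg h1, if_neg (by omega)]
        have hexp : (∑ s ∈ Finset.univ.filter (fun s => s < t), ((hiJ n (m+1) J s : ℕ))) = 0 := by
          apply Finset.sum_eq_zero
          intro s hs
          have hst : s < t := (Finset.mem_filter.mp hs).2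
          rw [Fin.lt_def, htv] at hst
          rw [hhilt s (by omega)]
          rfl
        rw [hexp, pow_zero, hupd]
        simp [hhit]
    · rw [if_neg (fun hc => hKK hc.2)]
      apply Finset.sum_eq_zero
      intro L' _
      rw [if_neg (fun hc => hKK hc.2), mul_zero]

end Aux

/-- For all binary strings `J, K`, the matrix `A_{JK}` equals the
rank-one matrix unit `|j₁…jₙ⟩⟨k₁…kₙ|`. -/
theorem AJK_eq_stdBasisMatrix (n : ℕ) (hn : 1 ≤ n) (J K : Idx n) :
    AJK n J K = Matrix.single J K 1 := by
  rw [AJK]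
  have h1 : (List.finRange n).reverse = ((List.finRange n).take n).reverse := by
    rw [List.take_of_length_le (le_of_eq List.length_finRange)]
  rw [h1, lo_prod K n le_rfl]
  have h2 : ((List.finRange n).map fun s => cdag n s (J s))
      = ((List.finRange n).drop 0).map fun s => cdag n s (J s) := by
    rw [List.drop_zero]
  rw [h2]
  have h3 : Matrix.of (fun L L' => if L = lowz n n L' ∧ (∀ s : Fin n, s.val < n → L' s = K s)
        then (1:ℂ) else 0)
      = Matrix.of (fun L L' : Idx n => if L = hiJ n n J ∧ L' = K then (1:ℂ) else 0) := by
    ext L L'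
    simp only [Matrix.of_apply]
    apply if_congr _ rfl rfl
    have e1 : lowz n n L' = hiJ n n J := by
      funext s
      show (if s.val < n then 0 else L' s) = if n ≤ s.val then J s else 0
      rw [if_pos s.isLt, if_neg (by omega)]
    rw [e1]
    apply and_congr Iff.rfl
    constructor
    · intro h
      funext s
      exact h s s.isLt
    · intro h s _
      rw [h]
  rw [h3, hi_prod J K n 0 (by omega)]
  ext L L'
  have e2 : hiJ n 0 J = J := funext fun s => if_pos (Nat.zero_le _)
  simp only [Matrix.of_apply, e2]
  show _ = if J = L ∧ K = L' then (1:ℂ) else 0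
  exact if_congr (and_congr eq_comm eq_comm) rfl rfl
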